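/- Let n ≥ 4 be an even integer and let W_n be the wheel graph on n+1 vertices. Then for every set F of edges of W_n such that W_n − F has no isolated vertices, γ_t(W_n − F) ≤ γ_t(W_n) + (n−2) = n; moreover b_t^{n−2}(W_n) = 2n − (n+4)/2. -/

import Mathlib

open SimpleGraph

/-- A set `S` of vertices is a total dominating set of `G` if every vertex of `G`
is adjacent to at least one vertex of `S`. -/
def IsTotalDominatingSet {V : Type*} (G : SimpleGraph V) (S : Set V) : Prop :=
  ∀ v : V, ∃ u ∈ S, G.Adj v u

/-- The total domination number of `G`: the minimum cardinality of a total
dominating set of `G`. -/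
noncomputable def totalDominationNumber {V : Type*} (G : SimpleGraph V) : ℕ :=
  sInf {n : ℕ | ∃ S : Set V, S.ncard = n ∧ IsTotalDominatingSet G S}

/-- A graph has no isolated vertices if every vertex has a neighbor. -/
def NoIsolatedVerts {V : Type*} (G : SimpleGraph V) : Prop :=
  ∀ v : V, ∃ u : V, G.Adj v u

/-- The `k`-total bondage number of `G`: the minimum cardinality of a set `F` of
edges of `G` such that `G − F` has no isolated vertices and the total domination
number of `G − F` is at least `γ_t(G) + k`. -/
noncomputable def kTotalBondage {V : Type*} (G : SimpleGraph V) (k : ℕ) : ℕ :=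
  sInf {m : ℕ | ∃ F : Set (Sym2 V), F ⊆ G.edgeSet ∧ F.ncard = m ∧
    NoIsolatedVerts (G.deleteEdges F) ∧
    totalDominationNumber G + k ≤ totalDominationNumber (G.deleteEdges F)}

/-- The wheel graph `W_n` on `n + 1` vertices: a hub vertex (`none`) joined to
every vertex of a cycle `C_n` (the vertices `some i`). -/
def wheelGraph (n : ℕ) : SimpleGraph (Option (Fin n)) :=
  SimpleGraph.fromRel (fun v w =>
    v = none ∨ ∃ i j : Fin n, v = some i ∧ w = some j ∧ (cycleGraph n).Adj i j)

section Aux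
open Finset
lemma tdn_le {V : Type*} {G : SimpleGraph V} {S : Set V} (h : IsTotalDominatingSet G S) :
    totalDominationNumber G ≤ S.ncard := Nat.sInf_le ⟨S, rfl, h⟩

lemma tdn_ge {V : Type*} {G : SimpleGraph V} {m : ℕ}
    (hne : ∃ S : Set V, IsTotalDominatingSet G S)
    (h : ∀ S : Set V, IsTotalDominatingSet G S → m ≤ S.ncard) :
    m ≤ totalDominationNumber G := by
  obtain ⟨S0, hS0⟩ := hne
  have hmem := Nat.sInf_mem (⟨S0.ncard, S0, rfl, hS0⟩ :
    Set.Nonempty {n : ℕ | ∃ S : Set V, S.ncard = n ∧ IsTotalDominatingSet G S})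
  obtain ⟨S, hcard, hS⟩ := hmem
  rw [totalDominationNumber, ← hcard]
  exact h S hS

lemma two_le_of_TDS {V : Type*} [Finite V] [Nonempty V] {G : SimpleGraph V} {S : Set V}
    (h : IsTotalDominatingSet G S) : 2 ≤ S.ncard := by
  rcases Nat.lt_or_ge S.ncard 2 with hlt | hge
  · exfalso
    interval_cases hc : S.ncard
    · rw [Set.ncard_eq_zero (Set.toFinite S)] at hc
      obtain ⟨u, hu, -⟩ := h (Classical.arbitrary V)
      simp [hc] at hu
    · obtain ⟨a, rfl⟩ := Set.ncard_eq_one.mp hc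
      obtain ⟨u, hu, hadj⟩ := h a
      rw [Set.mem_singleton_iff] at hu
      subst hu
      exact G.irrefl hadj
  · exact hge

lemma exists_compl_singleton_TDS {V : Type*} [Fintype V] [DecidableEq V] (G : SimpleGraph V)
    [DecidableRel G.Adj] (hodd : Odd (Fintype.card V)) (hni : NoIsolatedVerts G) :
    ∃ v : V, IsTotalDominatingSet G {v}ᶜ := by
  by_contra hc
  push_neg at hc
  have key : ∀ v : V, ∃ u : V, ∀ y, G.Adj u y → y = v := by
    intro v
    have h1 := hc v
    unfold IsTotalDominatingSet at h1
    push_neg at h1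
    obtain ⟨u, hu⟩ := h1
    refine ⟨u, fun y hy => ?_⟩
    by_contra hne
    exact hu y (by simpa using hne) hy
  choose f hf using key
  have hff : ∀ v, f (f v) = v := by
    intro v
    have h2 : G.Adj (f (f v)) (f v) := by
      obtain ⟨y, hy⟩ := hni (f (f v)); rwa [hf (f v) y hy] at hy
    exact hf v _ h2.symm
  have hdeg : ∀ w : V, G.degree w = 1 := by
    intro w
    have h1 : ∀ y, G.Adj w y → y = f w := fun y hy => hf (f w) y (by rwa [hff w])
    have h2 : G.Adj w (f w) := by obtain ⟨y, hy⟩ := hni w; rwa [h1 y hy] at hy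
    rw [SimpleGraph.degree]
    have h3 : G.neighborFinset w = {f w} := by
      ext y
      simp only [SimpleGraph.mem_neighborFinset, Finset.mem_singleton]
      exact ⟨fun h => h1 y h, fun h => h ▸ h2⟩
    rw [h3, Finset.card_singleton]
  have hsum := G.sum_degrees_eq_twice_card_edges
  simp only [hdeg, Finset.sum_const, smul_eq_mul, mul_one, Finset.card_univ] at hsum
  exact (Nat.not_even_iff_odd.mpr hodd) ⟨#G.edgeFinset, by omega⟩


lemma surplus_le {V : Type*} [Fintype V] [DecidableEq V] (G : SimpleGraph V)
    [DecidableRel G.Adj] (hni : ∀ v : V, ∃ u, G.Adj v u)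
    (hw : ∀ v w : V, v ≠ w → ∃ u, ∀ y, G.Adj u y → y = v ∨ y = w) :
    ∑ v, G.degree v ≤ Fintype.card V + 3 := by
  classical
  have hN : ∀ u y : V, G.Adj u y ↔ y ∈ G.neighborFinset u :=
    fun u y => (SimpleGraph.mem_neighborFinset _ _ _).symm
  set P : Finset V := univ.filter (fun v => ∃ u, G.neighborFinset v = {u} ∧ G.neighborFinset u = {v}) with hPdef
  set R : Finset V := univ \ P with hRdef
  have hmemP : ∀ v, v ∈ P ↔ ∃ u, G.neighborFinset v = {u} ∧ G.neighborFinset u = {v} := by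
    intro v; simp [hPdef]
  have hmemR : ∀ v, v ∈ R ↔ v ∉ P := by intro v; simp [hRdef]
  -- R is closed under neighbors
  have hRclosed : ∀ v y, v ∈ R → y ∈ G.neighborFinset v → y ∈ R := by
    intro v y hv hy
    rw [hmemR]
    intro hyP
    obtain ⟨u, h1, h2⟩ := (hmemP y).mp hyP
    have hvy : v ∈ G.neighborFinset y := (hN y v).mp ((hN v y).mpr hy).symm
    rw [h1, Finset.mem_singleton] at hvy
    exact (hmemR v).mp hv ((hmemP v).mpr ⟨y, by rw [← hvy] at h2; exact h2, by rw [hvy]; exact h1⟩)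
  -- supports inside R, and the rest B
  set A : Finset V := R.filter (fun x => ∃ u, G.neighborFinset u = {x}) with hAdef
  set B : Finset V := R \ A with hBdef
  have hAR : A ⊆ R := Finset.filter_subset _ _
  have hmemA : ∀ x, x ∈ A ↔ x ∈ R ∧ ∃ u, G.neighborFinset u = {x} := by
    intro x; simp [hAdef]
  have hmemB : ∀ x, x ∈ B ↔ x ∈ R ∧ x ∉ A := by intro x; simp [hBdef]
  -- leaves of supports in A lie in B
  have hleafB : ∀ x u, x ∈ A → G.neighborFinset u = {x} → u ∈ B := by
    intro x u hx hu
    have hxR := hAR hx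
    have hadjux : G.Adj u x := (hN u x).mpr (by rw [hu]; exact Finset.mem_singleton_self x)
    have hxu : u ∈ G.neighborFinset x := (hN x u).mp hadjux.symm
    have huR : u ∈ R := hRclosed x u hxR hxu
    rw [hmemB]
    refine ⟨huR, fun huA => ?_⟩
    obtain ⟨-, w, hwu⟩ := (hmemA u).mp huA
    have hadjwu : G.Adj w u := (hN w u).mpr (by rw [hwu]; exact Finset.mem_singleton_self u)
    have hwmem : w ∈ G.neighborFinset u := (hN u w).mp hadjwu.symm
    rw [hu, Finset.mem_singleton] at hwmem
    rw [hwmem] at hwu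
    exact (hmemR x).mp hxR ((hmemP x).mpr ⟨u, hwu, hu⟩)
  -- witnesses for pairs in B have exact neighborhood the pair
  have hBwit : ∀ v w, v ∈ B → w ∈ B → v ≠ w → ∃ u, G.neighborFinset u = {v, w} := by
    intro v w hv hw' hne
    obtain ⟨u, hu⟩ := hw v w hne
    have hsub : G.neighborFinset u ⊆ {v, w} := by
      intro y hy
      rcases hu y ((hN u y).mpr hy) with h | h <;> simp [h]
    have hnonempty : (G.neighborFinset u).Nonempty := by
      obtain ⟨y, hy⟩ := hni u
      exact ⟨y, (hN u y).mp hy⟩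
    have hvin : v ∈ G.neighborFinset u := by
      by_contra hvn
      have hsub' : G.neighborFinset u ⊆ {w} := by
        intro y hy
        rcases Finset.mem_insert.mp (hsub hy) with h | h
        · exact absurd (h ▸ hy) hvn
        · exact h
      have heq : G.neighborFinset u = {w} :=
        Finset.Subset.antisymm hsub' (Finset.singleton_subset_iff.mpr
          (by obtain ⟨y, hy⟩ := hnonempty; have := hsub' hy; simp at this; rwa [← this]))
      exact ((hmemB w).mp hw').2 ((hmemA w).mpr ⟨((hmemB w).mp hw').1, u, heq⟩)
    have hwin : w ∈ G.neighborFinset u := by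
      by_contra hwn
      have hsub' : G.neighborFinset u ⊆ {v} := by
        intro y hy
        rcases Finset.mem_insert.mp (hsub hy) with h | h
        · exact Finset.mem_singleton.mpr h
        · simp at h; exact absurd (h ▸ hy) hwn
      have heq : G.neighborFinset u = {v} :=
        Finset.Subset.antisymm hsub' (Finset.singleton_subset_iff.mpr
          (by obtain ⟨y, hy⟩ := hnonempty; have := hsub' hy; simp at this; rwa [← this]))
      exact ((hmemB v).mp hv).2 ((hmemA v).mpr ⟨((hmemB v).mp hv).1, u, heq⟩)
    refine ⟨u, Finset.Subset.antisymm hsub ?_⟩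
    intro y hy
    rcases Finset.mem_insert.mp hy with h | h
    · rwa [h]
    · simp at h; rwa [h]
  -- at most one support
  have hA1 : A.card ≤ 1 := by
    by_contra hA2
    push_neg at hA2
    obtain ⟨x, hx, y, hy, hxy⟩ := Finset.one_lt_card.mp hA2
    obtain ⟨hxR, lx, hlx⟩ := (hmemA x).mp hx
    obtain ⟨hyR, ly, hly⟩ := (hmemA y).mp hy
    have hlne : lx ≠ ly := by
      intro h; rw [h, hly] at hlx; exact hxy (Finset.singleton_inj.mp hlx.symm)
    obtain ⟨u, hu⟩ := hw lx ly hlne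
    have hadjlxx : G.Adj lx x := (hN lx x).mpr (by rw [hlx]; exact Finset.mem_singleton_self x)
    have hadjlyy : G.Adj ly y := (hN ly y).mpr (by rw [hly]; exact Finset.mem_singleton_self y)
    obtain ⟨z, hz⟩ := hni u
    rcases hu z hz with hzz | hzz
    · -- z = lx : u adjacent to lx, so u = x
      have huN : u ∈ G.neighborFinset lx := by rw [← hzz]; exact (hN z u).mp hz.symm
      rw [hlx, Finset.mem_singleton] at huN
      have hu' : ∀ t, G.Adj x t → t = lx ∨ t = ly := fun t ht => hu t (by rw [← huN] at ht; exact ht)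
      have hNx : G.neighborFinset x = {lx} := by
        apply Finset.Subset.antisymm
        · intro t ht
          rcases hu' t ((hN x t).mpr ht) with h | h
          · simp [h]
          · exfalso
            have : x ∈ G.neighborFinset ly := by
              rw [← h]; exact (hN t x).mp ((hN x t).mpr ht).symm
            rw [hly, Finset.mem_singleton] at this
            exact hxy this
        · exact Finset.singleton_subset_iff.mpr ((hN x lx).mp hadjlxx.symm)
      exact (hmemR x).mp hxR ((hmemP x).mpr ⟨lx, hNx, hlx⟩)
    · -- z = ly : u = y
      have huN : u ∈ G.neighborFinset ly := by rw [← hzz]; exact (hN z u).mp hz.symm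
      rw [hly, Finset.mem_singleton] at huN
      have hu' : ∀ t, G.Adj y t → t = lx ∨ t = ly := fun t ht => hu t (by rw [← huN] at ht; exact ht)
      have hNy : G.neighborFinset y = {ly} := by
        apply Finset.Subset.antisymm
        · intro t ht
          rcases hu' t ((hN y t).mpr ht) with h | h
          · exfalso
            have : y ∈ G.neighborFinset lx := by
              rw [← h]; exact (hN t y).mp ((hN y t).mpr ht).symm
            rw [hlx, Finset.mem_singleton] at this
            exact hxy this.symm
          · simp [h]
        · exact Finset.singleton_subset_iff.mpr ((hN y ly).mp hadjlyy.symm)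
      exact (hmemR y).mp hyR ((hmemP y).mpr ⟨ly, hNy, hly⟩)
  -- witnesses lie in R
  have hwitR : ∀ u v w : V, v ≠ w → G.neighborFinset u = {v, w} → u ∈ R := by
    intro u v w hne hu
    rw [hmemR]
    intro huP
    obtain ⟨t, h1, h2⟩ := (hmemP u).mp huP
    rw [hu] at h1
    have hcd : ({v, w} : Finset V).card = 1 := by rw [h1]; simp
    rw [Finset.card_insert_of_notMem (by simp [hne]), Finset.card_singleton] at hcd
    omega
  have hRcard : R.card = A.card + B.card := by
    have := Finset.card_sdiff_add_card_eq_card hAR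
    rw [← hBdef] at this
    omega
  have hB3 : B.card ≤ 3 := by
    by_contra hB4
    push_neg at hB4
    have hBne : B.Nonempty := Finset.card_pos.mp (by omega)
    obtain ⟨b0, hb0⟩ := hBne
    have hgex : ∀ p : V × V, ∃ u, p ∈ B.offDiag → G.neighborFinset u = {p.1, p.2} := by
      intro p
      by_cases hp : p ∈ B.offDiag
      · obtain ⟨h1, h2, h3⟩ := Finset.mem_offDiag.mp hp
        obtain ⟨u, hu⟩ := hBwit p.1 p.2 h1 h2 h3
        exact ⟨u, fun _ => hu⟩
      · exact ⟨b0, fun h => absurd h hp⟩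
    choose g hg using hgex
    have himg : B.offDiag.image g ⊆ R := by
      intro b hb
      obtain ⟨p, hp, rfl⟩ := Finset.mem_image.mp hb
      obtain ⟨h1, h2, h3⟩ := Finset.mem_offDiag.mp hp
      exact hwitR (g p) p.1 p.2 h3 (hg p hp)
    have hcount : B.offDiag.card ≤ 2 * (B.offDiag.image g).card := by
      apply Finset.card_le_mul_card_image
      intro b hb
      obtain ⟨q, hq, hgq⟩ := Finset.mem_image.mp hb
      have hsub : B.offDiag.filter (fun p => g p = b) ⊆ {q, q.swap} := by
        intro p hp
        obtain ⟨hpo, hpb⟩ := Finset.mem_filter.mp hp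
        obtain ⟨hp1, hp2, hp3⟩ := Finset.mem_offDiag.mp hpo
        obtain ⟨hq1, hq2, hq3⟩ := Finset.mem_offDiag.mp hq
        have heq : ({p.1, p.2} : Finset V) = {q.1, q.2} := by
          rw [← hg p hpo, ← hg q hq, hpb, hgq]
        have hm1 : p.1 = q.1 ∨ p.1 = q.2 := by
          have : p.1 ∈ ({q.1, q.2} : Finset V) := heq ▸ (by simp)
          simpa using this
        have hm2 : p.2 = q.1 ∨ p.2 = q.2 := by
          have : p.2 ∈ ({q.1, q.2} : Finset V) := heq ▸ (by simp)
          simpa using this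
        simp only [Finset.mem_insert, Finset.mem_singleton]
        rcases hm1 with h1 | h1 <;> rcases hm2 with h2 | h2
        · exact absurd (h1.trans h2.symm) hp3
        · left; exact Prod.ext h1 h2
        · right
          have : q.swap = (q.2, q.1) := rfl
          rw [this]
          exact Prod.ext h1 h2
        · exact absurd (h1.trans h2.symm) hp3
      calc (B.offDiag.filter (fun p => g p = b)).card
          ≤ ({q, q.swap} : Finset (V × V)).card := Finset.card_le_card hsub
        _ ≤ 2 := (Finset.card_insert_le _ _).trans (by simp)
    have hod : B.offDiag.card = B.card * B.card - B.card := Finset.offDiag_card B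
    have himgcard : (B.offDiag.image g).card ≤ R.card := Finset.card_le_card himg
    have hmul : 4 * B.card ≤ B.card * B.card :=
      Nat.mul_le_mul_right _ (by omega)
    omega
  -- exclude R.card = 4
  have hR3 : R.card ≤ 3 := by
    by_contra hR4
    push_neg at hR4
    have hA1' : A.card = 1 := by omega
    have hB3' : B.card = 3 := by omega
    obtain ⟨x, hxA⟩ := Finset.card_eq_one.mp hA1'
    have hx : x ∈ A := by rw [hxA]; exact Finset.mem_singleton_self x
    obtain ⟨hxR, lx, hlx⟩ := (hmemA x).mp hx
    have hlxB : lx ∈ B := hleafB x lx hx hlx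
    have h2 : (B.erase lx).card = 2 := by rw [Finset.card_erase_of_mem hlxB, hB3']
    obtain ⟨b, c, hbc, hbcE⟩ := Finset.card_eq_two.mp h2
    have hbB : b ∈ B := Finset.mem_of_mem_erase (by rw [hbcE]; simp)
    have hcB : c ∈ B := Finset.mem_of_mem_erase (by rw [hbcE]; simp)
    have hblx : b ≠ lx := Finset.ne_of_mem_erase (by rw [hbcE]; simp)
    have hclx : c ≠ lx := Finset.ne_of_mem_erase (by rw [hbcE]; simp)
    obtain ⟨u, hu⟩ := hBwit b c hbB hcB hbc
    have huR : u ∈ R := hwitR u b c hbc hu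
    have hub : u ≠ b := by
      intro h; subst h
      exact G.irrefl ((hN u u).mpr (by rw [hu]; simp))
    have huc : u ≠ c := by
      intro h; subst h
      exact G.irrefl ((hN u u).mpr (by rw [hu]; simp))
    rcases em (u ∈ A) with huA | huNA
    · have hux : u = x := by rw [hxA, Finset.mem_singleton] at huA; exact huA
      have hlxN : lx ∈ G.neighborFinset u := by
        rw [hux]
        exact (hN x lx).mp ((hN lx x).mpr (by rw [hlx]; simp)).symm
      rw [hu] at hlxN
      simp only [Finset.mem_insert, Finset.mem_singleton] at hlxN
      rcases hlxN with h | h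
      · exact hblx h.symm
      · exact hclx h.symm
    · have huB : u ∈ B := (hmemB u).mpr ⟨huR, huNA⟩
      rcases em (u = lx) with h | h
      · rw [h, hlx] at hu
        have hcd : ({x} : Finset V).card = ({b, c} : Finset V).card := by rw [hu]
        rw [Finset.card_singleton, Finset.card_insert_of_notMem (by simp [hbc]),
          Finset.card_singleton] at hcd
        omega
      · have : u ∈ B.erase lx := Finset.mem_erase.mpr ⟨h, huB⟩
        rw [hbcE] at this
        simp only [Finset.mem_insert, Finset.mem_singleton] at this
        rcases this with h' | h'
        · exact hub h'
        · exact huc h'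
  -- final counting
  have hsplit : ∑ v ∈ R, G.degree v + ∑ v ∈ P, G.degree v = ∑ v, G.degree v := by
    rw [hRdef]
    exact Finset.sum_sdiff (Finset.subset_univ P)
  have hPdeg : ∀ v ∈ P, G.degree v = 1 := by
    intro v hv
    obtain ⟨u, h1, -⟩ := (hmemP v).mp hv
    rw [SimpleGraph.degree, h1, Finset.card_singleton]
  have hsumP : ∑ v ∈ P, G.degree v = P.card := by
    rw [Finset.sum_congr rfl hPdeg, Finset.sum_const, smul_eq_mul, mul_one]
  have hRdeg : ∀ v ∈ R, G.degree v ≤ R.card - 1 := by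
    intro v hv
    have hsub : G.neighborFinset v ⊆ R.erase v := by
      intro y hy
      exact Finset.mem_erase.mpr ⟨fun h => G.irrefl (h ▸ (hN v y).mpr hy), hRclosed v y hv hy⟩
    calc G.degree v = (G.neighborFinset v).card := rfl
      _ ≤ (R.erase v).card := Finset.card_le_card hsub
      _ = R.card - 1 := Finset.card_erase_of_mem hv
  have hsumR : ∑ v ∈ R, G.degree v ≤ R.card * (R.card - 1) := by
    calc ∑ v ∈ R, G.degree v ≤ ∑ _v ∈ R, (R.card - 1) := Finset.sum_le_sum hRdeg
      _ = R.card * (R.card - 1) := by rw [Finset.sum_const, smul_eq_mul]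
  have hPle : P.card ≤ Finset.univ.card := Finset.card_le_card (Finset.subset_univ P)
  have hcardV : Fintype.card V = P.card + R.card := by
    have := Finset.card_sdiff_of_subset (Finset.subset_univ P)
    rw [← hRdef] at this
    rw [← Finset.card_univ]
    omega
  have hkey : R.card * (R.card - 1) ≤ R.card + 3 := by
    have hr : R.card = 0 ∨ R.card = 1 ∨ R.card = 2 ∨ R.card = 3 := by omega
    rcases hr with h|h|h|h <;> rw [h] <;> norm_num
  omega



lemma wheel_adj_none {n : ℕ} (i : Fin n) : (wheelGraph n).Adj none (some i) := by
  rw [wheelGraph, fromRel_adj]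
  exact ⟨by simp, Or.inl (Or.inl rfl)⟩

lemma wheel_adj_some {n : ℕ} (i j : Fin n) :
    (wheelGraph n).Adj (some i) (some j) ↔ (cycleGraph n).Adj i j := by
  rw [wheelGraph, fromRel_adj]
  constructor
  · rintro ⟨hne, h | h⟩
    · rcases h with h | ⟨a, b, ha, hb, hadj⟩
      · exact absurd h (by simp)
      · rw [Option.some_inj.mp ha, Option.some_inj.mp hb] at *; exact hadj
    · rcases h with h | ⟨a, b, ha, hb, hadj⟩
      · exact absurd h (by simp)
      · rw [Option.some_inj.mp ha, Option.some_inj.mp hb] at *; exact hadj.symm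
  · intro h
    exact ⟨by simpa using h.ne, Or.inl (Or.inr ⟨i, j, rfl, rfl, h⟩)⟩

lemma wheel_adj_none_right {n : ℕ} (i : Fin n) : (wheelGraph n).Adj (some i) none :=
  (wheel_adj_none i).symm

lemma cyc_step {n : ℕ} (hn : 2 ≤ n) (a b : Fin n) (h : b.val = a.val + 1) :
    (cycleGraph n).Adj a b := by
  rw [cycleGraph_adj']
  right
  rw [Fin.sub_def]
  simp only
  have ha := a.isLt
  have hb := b.isLt
  rw [show n - a.val + b.val = n + 1 by omega, Nat.add_mod_left, Nat.mod_eq_of_lt (by omega)]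

lemma cyc_adj_succ {n : ℕ} [NeZero n] (hn : 2 ≤ n) (i : Fin n) : (cycleGraph n).Adj i (i + 1) := by
  rw [cycleGraph_adj']
  right
  rw [add_sub_cancel_left, Fin.val_one']
  exact Nat.mod_eq_of_lt (by omega)

lemma cyc_adj_iff {n : ℕ} [NeZero n] (hn : 2 ≤ n) (i j : Fin n) :
    (cycleGraph n).Adj i j ↔ j = i + 1 ∨ i = j + 1 := by
  have h1 : (1 : Fin n).val = 1 := by rw [Fin.val_one']; exact Nat.mod_eq_of_lt (by omega)
  rw [cycleGraph_adj']
  constructor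
  · rintro (h | h)
    · right
      have h2 : i - j = 1 := Fin.val_injective (by rw [h1]; exact h)
      rw [sub_eq_iff_eq_add] at h2
      exact h2.trans (add_comm 1 j)
    · left
      have h2 : j - i = 1 := Fin.val_injective (by rw [h1]; exact h)
      rw [sub_eq_iff_eq_add] at h2
      exact h2.trans (add_comm 1 i)
  · rintro (h | h)
    · right; rw [h, add_sub_cancel_left, h1]
    · left; rw [h, add_sub_cancel_left, h1]

def wheelEdges (n : ℕ) [NeZero n] : Finset (Sym2 (Option (Fin n))) :=
  (univ.image fun i : Fin n => s(none, some i)) ∪ (univ.image fun i : Fin n => s(some i, some (i + 1)))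

lemma mem_wheelEdges {n : ℕ} [NeZero n] (e : Sym2 (Option (Fin n))) :
    e ∈ wheelEdges n ↔ (∃ i : Fin n, s(none, some i) = e) ∨ ∃ i : Fin n, s(some i, some (i + 1)) = e := by
  simp [wheelEdges]

lemma wheel_edgeSet {n : ℕ} [NeZero n] (hn : 4 ≤ n) :
    (wheelGraph n).edgeSet = ↑(wheelEdges n) := by
  ext e
  induction e with
  | h a b =>
    rw [SimpleGraph.mem_edgeSet, Finset.mem_coe, mem_wheelEdges]
    constructor
    · intro hadj
      match a, b with
      | none, none => exact absurd rfl hadj.ne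
      | none, some i => exact Or.inl ⟨i, rfl⟩
      | some i, none => exact Or.inl ⟨i, Sym2.eq_swap⟩
      | some i, some j =>
        rw [wheel_adj_some] at hadj
        rcases (cyc_adj_iff (by omega) i j).mp hadj with h | h
        · exact Or.inr ⟨i, by rw [h]⟩
        · exact Or.inr ⟨j, by rw [h]; exact Sym2.eq_swap⟩
    · rintro (⟨i, he⟩ | ⟨i, he⟩)
      · rcases Sym2.eq_iff.mp he with ⟨h1, h2⟩ | ⟨h1, h2⟩
        · rw [← h1, ← h2]; exact wheel_adj_none i
        · rw [← h1, ← h2]; exact wheel_adj_none_right i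
      · rcases Sym2.eq_iff.mp he with ⟨h1, h2⟩ | ⟨h1, h2⟩
        · rw [← h1, ← h2]; exact (wheel_adj_some _ _).mpr (cyc_adj_succ (by omega) i)
        · rw [← h1, ← h2]; exact ((wheel_adj_some _ _).mpr (cyc_adj_succ (by omega) i)).symm

lemma val_add_one {n : ℕ} [NeZero n] (hn : 2 ≤ n) (a : Fin n) :
    (a + 1).val = (a.val + 1) % n := by
  rw [Fin.add_def, Fin.val_one']
  rw [Nat.mod_eq_of_lt (by omega : 1 < n)]

lemma wheelEdges_card {n : ℕ} [NeZero n] (hn : 4 ≤ n) : (wheelEdges n).card = 2 * n := by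
  have hinj1 : Function.Injective (fun i : Fin n => s(none, some i) : Fin n → Sym2 (Option (Fin n))) := by
    intro i j h
    simp only [Sym2.eq_iff] at h
    rcases h with ⟨-, h2⟩ | ⟨h1, -⟩
    · exact Option.some_inj.mp h2
    · exact absurd h1 (by simp)
  have hinj2 : Function.Injective (fun i : Fin n => s(some i, some (i + 1)) : Fin n → Sym2 (Option (Fin n))) := by
    intro i j h
    simp only [Sym2.eq_iff] at h
    rcases h with ⟨h1, -⟩ | ⟨h1, h2⟩
    · exact Option.some_inj.mp h1
    · exfalso
      have e1 : i = j + 1 := Option.some_inj.mp h1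
      have e2 : i + 1 = j := Option.some_inj.mp h2
      have v1 : i.val = (j.val + 1) % n := by rw [e1]; exact val_add_one (by omega) j
      have v2 : j.val = (i.val + 1) % n := by rw [← e2]; exact val_add_one (by omega) i
      have hi := i.isLt
      have hj := j.isLt
      rcases Nat.lt_or_ge (j.val + 1) n with h' | h'
      · rw [Nat.mod_eq_of_lt h'] at v1
        rcases Nat.lt_or_ge (i.val + 1) n with h'' | h''
        · rw [Nat.mod_eq_of_lt h''] at v2; omega
        · have h3 : i.val + 1 = n := by omega
          rw [h3, Nat.mod_self] at v2; omega
      · have h3 : j.val + 1 = n := by omega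
        rw [h3, Nat.mod_self] at v1
        rcases Nat.lt_or_ge (i.val + 1) n with h'' | h''
        · rw [Nat.mod_eq_of_lt h''] at v2; omega
        · have h4 : i.val + 1 = n := by omega
          rw [h4, Nat.mod_self] at v2; omega
  have hdisj : Disjoint (univ.image fun i : Fin n => s(none, some i))
      (univ.image fun i : Fin n => s(some i, some (i + 1)) : Finset (Sym2 (Option (Fin n)))) := by
    rw [Finset.disjoint_left]
    intro e h1 h2
    obtain ⟨i, -, hi⟩ := Finset.mem_image.mp h1
    obtain ⟨j, -, hj⟩ := Finset.mem_image.mp h2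
    rw [← hj] at hi
    rcases Sym2.eq_iff.mp hi with ⟨h, -⟩ | ⟨h, -⟩ <;> exact absurd h (by simp)
  rw [wheelEdges, Finset.card_union_of_disjoint hdisj,
    Finset.card_image_of_injective _ hinj1, Finset.card_image_of_injective _ hinj2,
    Finset.card_univ, Fintype.card_fin]
  omega

lemma wheel_tdn {n : ℕ} (hn : 4 ≤ n) : totalDominationNumber (wheelGraph n) = 2 := by
  haveI : NeZero n := ⟨by omega⟩
  have hTDS : IsTotalDominatingSet (wheelGraph n) {none, some 0} := by
    intro v
    match v with
    | none => exact ⟨some 0, by simp, wheel_adj_none 0⟩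
    | some i => exact ⟨none, by simp, wheel_adj_none_right i⟩
  have hle : totalDominationNumber (wheelGraph n) ≤ 2 := by
    have h := tdn_le hTDS
    rwa [Set.ncard_pair (by simp)] at h
  have hge : 2 ≤ totalDominationNumber (wheelGraph n) :=
    tdn_ge ⟨_, hTDS⟩ (fun _ hS => two_le_of_TDS hS)
  omega

lemma part1 {n : ℕ} (hn : 4 ≤ n) (hpar : Even n) (F : Set (Sym2 (Option (Fin n))))
    (hni : NoIsolatedVerts ((wheelGraph n).deleteEdges F)) :
    totalDominationNumber ((wheelGraph n).deleteEdges F) ≤ n := by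
  classical
  set H := (wheelGraph n).deleteEdges F with hH
  haveI : DecidableRel H.Adj := Classical.decRel _
  have hodd : Odd (Fintype.card (Option (Fin n))) := by
    rw [Fintype.card_option, Fintype.card_fin]
    obtain ⟨m, rfl⟩ := hpar
    exact ⟨m, by omega⟩
  obtain ⟨v, hv⟩ := exists_compl_singleton_TDS H hodd hni
  have hle := tdn_le hv
  have hncard : ({v}ᶜ : Set (Option (Fin n))).ncard = n := by
    have h1 : ({v}ᶜ : Set (Option (Fin n))) = Set.univ \ {v} := by
      rw [Set.compl_eq_univ_diff]
    rw [h1, Set.ncard_diff (Set.subset_univ _), Set.ncard_univ, Set.ncard_singleton,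
      Nat.card_eq_fintype_card, Fintype.card_option, Fintype.card_fin]
    omega
  omega

lemma c1_exists {n : ℕ} (hn : 4 ≤ n) (hpar : Even n) :
    ∃ F : Set (Sym2 (Option (Fin n))), F ⊆ (wheelGraph n).edgeSet ∧
      F.ncard = 2 * n - (n + 4) / 2 ∧
      NoIsolatedVerts ((wheelGraph n).deleteEdges F) ∧
      n ≤ totalDominationNumber ((wheelGraph n).deleteEdges F) := by
  classical
  haveI : NeZero n := ⟨by omega⟩
  obtain ⟨m, hm⟩ := hpar
  have hm2 : 2 ≤ m := by omega
  set vt : ℕ → Fin n := fun a => ⟨a % n, Nat.mod_lt _ (by omega)⟩ with hvt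
  have hvtval : ∀ a, a < n → (vt a).val = a := fun a ha => Nat.mod_eq_of_lt ha
  have hkvt : ∀ k : Fin n, vt k.val = k := fun k => Fin.val_injective (hvtval _ k.isLt)
  have hvteq : ∀ a b : ℕ, a < n → b < n → vt a = vt b → a = b := by
    intro a b ha hb h
    have := congrArg Fin.val h
    rwa [hvtval a ha, hvtval b hb] at this
  set K : Finset (Sym2 (Option (Fin n))) :=
    {s(none, some (vt 0)), s(none, some (vt 1)), s(some (vt 0), some (vt 1))} ∪
      (Finset.Ico 1 m).image (fun j => s(some (vt (2*j)), some (vt (2*j+1)))) with hK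
  have hmemK : ∀ e, e ∈ K ↔ e = s(none, some (vt 0)) ∨ e = s(none, some (vt 1)) ∨
      e = s(some (vt 0), some (vt 1)) ∨
      ∃ j, 1 ≤ j ∧ j < m ∧ e = s(some (vt (2*j)), some (vt (2*j+1))) := by
    intro e
    simp only [hK, Finset.mem_union, Finset.mem_insert, Finset.mem_singleton,
      Finset.mem_image, Finset.mem_Ico]
    constructor
    · rintro ((h | h | h) | ⟨j, ⟨hj1, hj2⟩, hje⟩)
      · exact Or.inl h
      · exact Or.inr (Or.inl h)
      · exact Or.inr (Or.inr (Or.inl h))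
      · exact Or.inr (Or.inr (Or.inr ⟨j, hj1, hj2, hje.symm⟩))
    · rintro (h | h | h | ⟨j, hj1, hj2, hje⟩)
      · exact Or.inl (Or.inl h)
      · exact Or.inl (Or.inr (Or.inl h))
      · exact Or.inl (Or.inr (Or.inr h))
      · exact Or.inr ⟨j, ⟨hj1, hj2⟩, hje.symm⟩
  have hadjK : ∀ e ∈ K, e ∈ (wheelGraph n).edgeSet := by
    intro e he
    rcases (hmemK e).mp he with h | h | h | ⟨j, hj1, hj2, h⟩ <;> rw [h, SimpleGraph.mem_edgeSet]
    · exact wheel_adj_none _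
    · exact wheel_adj_none _
    · exact (wheel_adj_some _ _).mpr (cyc_step (by omega) _ _
        (by rw [hvtval 0 (by omega), hvtval 1 (by omega)]))
    · exact (wheel_adj_some _ _).mpr (cyc_step (by omega) _ _
        (by rw [hvtval (2*j) (by omega), hvtval (2*j+1) (by omega)]))
  set F : Set (Sym2 (Option (Fin n))) := (wheelGraph n).edgeSet \ ↑K with hF
  set H := (wheelGraph n).deleteEdges F with hH
  have hHadj : ∀ a b : Option (Fin n), H.Adj a b ↔ s(a, b) ∈ K := by
    intro a b
    rw [hH, SimpleGraph.deleteEdges_adj]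
    constructor
    · rintro ⟨hadj, hnF⟩
      by_contra hK'
      exact hnF ⟨(SimpleGraph.mem_edgeSet _).mpr hadj, fun hc => hK' (Finset.mem_coe.mp hc)⟩
    · intro hK'
      refine ⟨(SimpleGraph.mem_edgeSet _).mp (hadjK _ hK'), ?_⟩
      rintro ⟨-, hnot⟩
      exact hnot (Finset.mem_coe.mpr hK')
  have hvne01 : vt 0 ≠ vt 1 := by
    intro h; exact absurd (hvteq 0 1 (by omega) (by omega) h) (by omega)
  -- no isolated vertices
  have hNI : NoIsolatedVerts H := by
    intro v
    match v with
    | none =>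
      exact ⟨some (vt 0), (hHadj _ _).mpr ((hmemK _).mpr (Or.inl rfl))⟩
    | some k =>
      have hik := k.isLt
      rcases Nat.lt_or_ge k.val 2 with h2 | h2
      · rcases Nat.lt_or_ge k.val 1 with h1 | h1
        · -- k = vt 0
          have hk0 : k = vt 0 := Fin.val_injective (by rw [hvtval 0 (by omega)]; omega)
          refine ⟨some (vt 1), (hHadj _ _).mpr ((hmemK _).mpr (Or.inr (Or.inr (Or.inl ?_))))⟩
          rw [hk0]
        · -- k = vt 1
          have hk1 : k = vt 1 := Fin.val_injective (by rw [hvtval 1 (by omega)]; omega)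
          refine ⟨some (vt 0), (hHadj _ _).mpr ((hmemK _).mpr (Or.inr (Or.inr (Or.inl ?_))))⟩
          rw [hk1, Sym2.eq_swap]
      · set j := k.val / 2 with hj
        have hj1 : 1 ≤ j := by omega
        have hj2 : j < m := by omega
        rcases Nat.even_or_odd k.val with he | ho
        · have hkval : k.val = 2 * j := by
            obtain ⟨t, ht⟩ := he; omega
          have hk : k = vt (2*j) := Fin.val_injective (by rw [hvtval (2*j) (by omega)]; omega)
          refine ⟨some (vt (2*j+1)), (hHadj _ _).mpr ((hmemK _).mpr
            (Or.inr (Or.inr (Or.inr ⟨j, hj1, hj2, ?_⟩))))⟩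
          rw [hk]
        · have hkval : k.val = 2 * j + 1 := by
            obtain ⟨t, ht⟩ := ho; omega
          have hk : k = vt (2*j+1) := Fin.val_injective (by rw [hvtval (2*j+1) (by omega)]; omega)
          refine ⟨some (vt (2*j)), (hHadj _ _).mpr ((hmemK _).mpr
            (Or.inr (Or.inr (Or.inr ⟨j, hj1, hj2, ?_⟩))))⟩
          rw [hk, Sym2.eq_swap]
  -- unique neighbours for the matched vertices
  have huniq : ∀ l : Fin n, 2 ≤ l.val → ∀ y, H.Adj (some l) y →
      (l.val % 2 = 0 ∧ y = some (vt (l.val + 1))) ∨ (l.val % 2 = 1 ∧ y = some (vt (l.val - 1))) := by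
    intro l hl y hadj
    have hil := l.isLt
    rcases (hmemK _).mp ((hHadj _ _).mp hadj) with h | h | h | ⟨j, hj1, hj2, h⟩
    · rcases Sym2.eq_iff.mp h with ⟨h1, -⟩ | ⟨h1, -⟩
      · exact absurd h1 (by simp)
      · have hv1 : (vt 0).val = l.val := congrArg Fin.val (Option.some_inj.mp h1).symm
        rw [hvtval 0 (by omega)] at hv1
        omega
    · rcases Sym2.eq_iff.mp h with ⟨h1, -⟩ | ⟨h1, -⟩
      · exact absurd h1 (by simp)
      · have hv1 : (vt 1).val = l.val := congrArg Fin.val (Option.some_inj.mp h1).symm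
        rw [hvtval 1 (by omega)] at hv1
        omega
    · rcases Sym2.eq_iff.mp h with ⟨h1, -⟩ | ⟨h1, -⟩
      · have hv1 : (vt 0).val = l.val := congrArg Fin.val (Option.some_inj.mp h1).symm
        rw [hvtval 0 (by omega)] at hv1
        omega
      · have hv1 : (vt 1).val = l.val := congrArg Fin.val (Option.some_inj.mp h1).symm
        rw [hvtval 1 (by omega)] at hv1
        omega
    · rcases Sym2.eq_iff.mp h with ⟨h1, h2⟩ | ⟨h1, h2⟩
      · have hv1 : (vt (2*j)).val = l.val := congrArg Fin.val (Option.some_inj.mp h1).symm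
        rw [hvtval (2*j) (by omega)] at hv1
        left
        refine ⟨by omega, ?_⟩
        rw [h2, show 2*j+1 = l.val+1 by omega]
      · have hv1 : (vt (2*j+1)).val = l.val := congrArg Fin.val (Option.some_inj.mp h1).symm
        rw [hvtval (2*j+1) (by omega)] at hv1
        right
        refine ⟨by omega, ?_⟩
        rw [h2, show 2*j = l.val-1 by omega]
  -- neighbour restrictions for the triangle
  have hTnone : ∀ y, H.Adj none y → y = some (vt 0) ∨ y = some (vt 1) := by
    intro y hadj
    rcases (hmemK _).mp ((hHadj _ _).mp hadj) with h | h | h | ⟨j, hj1, hj2, h⟩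
    · rcases Sym2.eq_iff.mp h with ⟨-, h2⟩ | ⟨h1, -⟩
      · exact Or.inl h2
      · exact absurd h1 (by simp)
    · rcases Sym2.eq_iff.mp h with ⟨-, h2⟩ | ⟨h1, -⟩
      · exact Or.inr h2
      · exact absurd h1 (by simp)
    · rcases Sym2.eq_iff.mp h with ⟨h1, -⟩ | ⟨h1, -⟩ <;> exact absurd h1 (by simp)
    · rcases Sym2.eq_iff.mp h with ⟨h1, -⟩ | ⟨h1, -⟩ <;> exact absurd h1 (by simp)
  have hT0 : ∀ y, H.Adj (some (vt 0)) y → y = none ∨ y = some (vt 1) := by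
    intro y hadj
    rcases (hmemK _).mp ((hHadj _ _).mp hadj) with h | h | h | ⟨j, hj1, hj2, h⟩
    · rcases Sym2.eq_iff.mp h with ⟨h1, -⟩ | ⟨-, h2⟩
      · exact absurd h1 (by simp)
      · exact Or.inl h2
    · rcases Sym2.eq_iff.mp h with ⟨h1, -⟩ | ⟨h1, -⟩
      · exact absurd h1 (by simp)
      · exact absurd (Option.some_inj.mp h1) hvne01
    · rcases Sym2.eq_iff.mp h with ⟨-, h2⟩ | ⟨h1, -⟩
      · exact Or.inr h2
      · exact absurd (Option.some_inj.mp h1) hvne01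
    · exfalso
      rcases Sym2.eq_iff.mp h with ⟨h1, -⟩ | ⟨h1, -⟩
      · have hv := congrArg Fin.val (Option.some_inj.mp h1)
        rw [hvtval 0 (by omega), hvtval (2*j) (by omega)] at hv
        omega
      · have hv := congrArg Fin.val (Option.some_inj.mp h1)
        rw [hvtval 0 (by omega), hvtval (2*j+1) (by omega)] at hv
        omega
  have hT1 : ∀ y, H.Adj (some (vt 1)) y → y = none ∨ y = some (vt 0) := by
    intro y hadj
    rcases (hmemK _).mp ((hHadj _ _).mp hadj) with h | h | h | ⟨j, hj1, hj2, h⟩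
    · rcases Sym2.eq_iff.mp h with ⟨h1, -⟩ | ⟨h1, -⟩
      · exact absurd h1 (by simp)
      · exact absurd (Option.some_inj.mp h1).symm hvne01
    · rcases Sym2.eq_iff.mp h with ⟨h1, -⟩ | ⟨-, h2⟩
      · exact absurd h1 (by simp)
      · exact Or.inl h2
    · rcases Sym2.eq_iff.mp h with ⟨h1, -⟩ | ⟨-, h2⟩
      · exact absurd (Option.some_inj.mp h1).symm hvne01
      · exact Or.inr h2
    · exfalso
      rcases Sym2.eq_iff.mp h with ⟨h1, -⟩ | ⟨h1, -⟩
      · have hv := congrArg Fin.val (Option.some_inj.mp h1)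
        rw [hvtval 1 (by omega), hvtval (2*j) (by omega)] at hv
        omega
      · have hv := congrArg Fin.val (Option.some_inj.mp h1)
        rw [hvtval 1 (by omega), hvtval (2*j+1) (by omega)] at hv
        omega
  -- every total dominating set of H has at least n vertices
  have hTDSn : ∀ S : Set (Option (Fin n)), IsTotalDominatingSet H S → n ≤ S.ncard := by
    intro S hS
    have hM : ∀ k : Fin n, 2 ≤ k.val → some k ∈ S := by
      intro k hk
      have hik := k.isLt
      rcases Nat.even_or_odd k.val with he | ho
      · have hpl : k.val + 1 < n := by obtain ⟨t, ht⟩ := he; omega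
        obtain ⟨u, huS, hadj⟩ := hS (some (vt (k.val + 1)))
        rcases huniq (vt (k.val+1)) (by rw [hvtval _ hpl]; omega) u hadj with ⟨hpar', hu⟩ | ⟨hpar', hu⟩
        · rw [hvtval _ hpl] at hpar'
          obtain ⟨t, ht⟩ := he; omega
        · rw [hvtval (k.val+1) hpl, Nat.add_sub_cancel, hkvt] at hu
          rwa [hu] at huS
      · have hpl : k.val - 1 < n := by omega
        have hpv : (vt (k.val - 1)).val = k.val - 1 := hvtval _ hpl
        obtain ⟨u, huS, hadj⟩ := hS (some (vt (k.val - 1)))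
        rcases huniq (vt (k.val-1)) (by rw [hpv]; obtain ⟨t,ht⟩ := ho; omega) u hadj with ⟨hpar', hu⟩ | ⟨hpar', hu⟩
        · rw [hpv] at hu
          have h3 : k.val - 1 + 1 = k.val := by obtain ⟨t,ht⟩ := ho; omega
          rw [h3, hkvt] at hu
          rwa [hu] at huS
        · rw [hpv] at hpar'
          obtain ⟨t,ht⟩ := ho; omega
    obtain ⟨u0, hu0S, hu0⟩ := hS none
    have hu0T := hTnone u0 hu0
    obtain ⟨u1, hu1S, hu1⟩ := hS u0
    have hu1ne : u1 ≠ u0 := fun h => H.irrefl (h ▸ hu1)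
    have hu1T : u1 = none ∨ u1 = some (vt 0) ∨ u1 = some (vt 1) := by
      rcases hu0T with h | h
      · rw [h] at hu1; rcases hT0 u1 hu1 with h' | h' <;> simp [h']
      · rw [h] at hu1; rcases hT1 u1 hu1 with h' | h' <;> simp [h']
    set MS : Set (Option (Fin n)) := (fun k : Fin n => some k) '' {k : Fin n | 2 ≤ k.val} with hMS
    have hMsub : MS ⊆ S := by rintro x ⟨k, hk, rfl⟩; exact hM k hk
    have hpairsub : ({u0, u1} : Set (Option (Fin n))) ⊆ S := by
      intro x hx
      rcases Set.mem_insert_iff.mp hx with h | h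
      · rw [h]; exact hu0S
      · rw [Set.mem_singleton_iff.mp h]; exact hu1S
    have hvalne : ∀ (k : Fin n), 2 ≤ k.val → ∀ j0 : ℕ, j0 < 2 → some k ≠ some (vt j0) := by
      intro k hk j0 hj0 h
      have := congrArg Fin.val (Option.some_inj.mp h)
      rw [hvtval j0 (by omega)] at this
      omega
    have hdisj : Disjoint MS ({u0, u1} : Set (Option (Fin n))) := by
      rw [Set.disjoint_left]
      rintro x ⟨k, hk, rfl⟩ hx
      rcases Set.mem_insert_iff.mp hx with h | h
      · rcases hu0T with h0 | h0
        · exact hvalne k hk 0 (by omega) (h.trans h0)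
        · exact hvalne k hk 1 (by omega) (h.trans h0)
      · have h' := Set.mem_singleton_iff.mp h
        rcases hu1T with h1 | h1 | h1
        · exact absurd (h'.trans h1) (by simp)
        · exact hvalne k hk 0 (by omega) (h'.trans h1)
        · exact hvalne k hk 1 (by omega) (h'.trans h1)
    have hcard2 : ({u0, u1} : Set (Option (Fin n))).ncard = 2 := Set.ncard_pair hu1ne.symm
    have hcardM : MS.ncard = n - 2 := by
      rw [hMS, Set.ncard_image_of_injective _ (Option.some_injective _)]
      have hset : ({k : Fin n | 2 ≤ k.val} : Set (Fin n)) = ↑(univ.filter fun k : Fin n => 2 ≤ k.val) := by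
        ext k; simp
      rw [hset, Set.ncard_coe_finset]
      have hneg : (univ.filter fun k : Fin n => ¬ 2 ≤ k.val) = ({vt 0, vt 1} : Finset (Fin n)) := by
        ext k
        simp only [Finset.mem_filter, Finset.mem_univ, true_and, Finset.mem_insert,
          Finset.mem_singleton, not_le]
        constructor
        · intro hk
          rcases Nat.lt_or_ge k.val 1 with h1 | h1
          · left; exact Fin.val_injective (by rw [hvtval 0 (by omega)]; omega)
          · right; exact Fin.val_injective (by rw [hvtval 1 (by omega)]; omega)
        · rintro (rfl | rfl)
          · rw [hvtval 0 (by omega)]; omega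
          · rw [hvtval 1 (by omega)]; omega
      have htot := Finset.card_filter_add_card_filter_not
        (s := (univ : Finset (Fin n))) (p := fun k : Fin n => 2 ≤ k.val)
      rw [hneg] at htot
      have hc2 : ({vt 0, vt 1} : Finset (Fin n)).card = 2 := by
        rw [Finset.card_insert_of_notMem (Finset.notMem_singleton.mpr hvne01),
          Finset.card_singleton]
      rw [Finset.card_univ, Fintype.card_fin, hc2] at htot
      omega
    have hsub : MS ∪ {u0, u1} ⊆ S := Set.union_subset hMsub hpairsub
    have hle := Set.ncard_le_ncard hsub (Set.toFinite S)
    rw [Set.ncard_union_eq hdisj (Set.toFinite _) (Set.toFinite _), hcardM, hcard2] at hle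
    omega
  -- the cardinality of K
  have he12 : s(none, some (vt 0)) ≠ (s(none, some (vt 1)) : Sym2 (Option (Fin n))) := by
    intro h
    rcases Sym2.eq_iff.mp h with ⟨-, h2⟩ | ⟨h1, -⟩
    · exact hvne01 (Option.some_inj.mp h2)
    · exact absurd h1 (by simp)
  have he13 : s(none, some (vt 0)) ≠ (s(some (vt 0), some (vt 1)) : Sym2 (Option (Fin n))) := by
    intro h
    rcases Sym2.eq_iff.mp h with ⟨h1, -⟩ | ⟨h1, -⟩ <;> exact absurd h1 (by simp)
  have he23 : s(none, some (vt 1)) ≠ (s(some (vt 0), some (vt 1)) : Sym2 (Option (Fin n))) := by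
    intro h
    rcases Sym2.eq_iff.mp h with ⟨h1, -⟩ | ⟨h1, -⟩ <;> exact absurd h1 (by simp)
  have hKcard : K.card = m + 2 := by
    have hinj : Set.InjOn (fun j => (s(some (vt (2*j)), some (vt (2*j+1))) : Sym2 (Option (Fin n))))
        ↑(Finset.Ico 1 m) := by
      intro i hi j hj h
      rw [Finset.coe_Ico, Set.mem_Ico] at hi hj
      rcases Sym2.eq_iff.mp h with ⟨h1, -⟩ | ⟨h1, -⟩
      · have := hvteq (2*i) (2*j) (by omega) (by omega) (Option.some_inj.mp h1)
        omega
      · have := hvteq (2*i) (2*j+1) (by omega) (by omega) (Option.some_inj.mp h1)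
        omega
    have hdisjK : Disjoint ({s(none, some (vt 0)), s(none, some (vt 1)),
        s(some (vt 0), some (vt 1))} : Finset (Sym2 (Option (Fin n))))
        ((Finset.Ico 1 m).image (fun j => s(some (vt (2*j)), some (vt (2*j+1))))) := by
      rw [Finset.disjoint_left]
      intro e he1 he2
      obtain ⟨j, hj, hje⟩ := Finset.mem_image.mp he2
      rw [Finset.mem_Ico] at hj
      rw [← hje] at he1
      rcases Finset.mem_insert.mp he1 with h | h
      · rcases Sym2.eq_iff.mp h with ⟨h1, -⟩ | ⟨-, h2⟩
        · exact absurd h1 (by simp)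
        · exact absurd h2 (by simp)
      · rcases Finset.mem_insert.mp h with h' | h'
        · rcases Sym2.eq_iff.mp h' with ⟨h1, -⟩ | ⟨-, h2⟩
          · exact absurd h1 (by simp)
          · exact absurd h2 (by simp)
        · rw [Finset.mem_singleton] at h'
          rcases Sym2.eq_iff.mp h' with ⟨h1, -⟩ | ⟨h1, -⟩
          · have := hvteq (2*j) 0 (by omega) (by omega) (Option.some_inj.mp h1)
            omega
          · have := hvteq (2*j) 1 (by omega) (by omega) (Option.some_inj.mp h1)
            omega
    have htri : ({s(none, some (vt 0)), s(none, some (vt 1)),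
        s(some (vt 0), some (vt 1))} : Finset (Sym2 (Option (Fin n)))).card = 3 := by
      rw [Finset.card_insert_of_notMem (by
          rw [Finset.mem_insert, Finset.mem_singleton]; push_neg; exact ⟨he12, he13⟩),
        Finset.card_insert_of_notMem (Finset.notMem_singleton.mpr he23),
        Finset.card_singleton]
    rw [hK, Finset.card_union_of_disjoint hdisjK, htri, Finset.card_image_of_injOn hinj,
      Nat.card_Ico]
    omega
  refine ⟨F, Set.diff_subset, ?_, hNI, ?_⟩
  · have hKsub : ↑K ⊆ (wheelGraph n).edgeSet := fun e he => hadjK e (Finset.mem_coe.mp he)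
    rw [hF, Set.ncard_diff hKsub (Set.toFinite _), wheel_edgeSet hn, Set.ncard_coe_finset,
      Set.ncard_coe_finset, wheelEdges_card hn, hKcard]
    omega
  · refine tdn_ge ⟨Set.univ, fun v => ?_⟩ hTDSn
    obtain ⟨u, hu⟩ := hNI v
    exact ⟨u, Set.mem_univ u, hu⟩


end Aux

/-- For even `n ≥ 4`, removing edges from the wheel `W_n` can increase the total
domination number by at most `n − 2` (i.e. up to `n`), and
`b_t^{n−2}(W_n) = 2n − (n+4)/2`. -/
theorem kTotalBondage_wheelGraph_even (n : ℕ) (hn : 4 ≤ n) (hpar : Even n) :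
    (∀ F : Set (Sym2 (Option (Fin n))), F ⊆ (wheelGraph n).edgeSet →
      NoIsolatedVerts ((wheelGraph n).deleteEdges F) →
      totalDominationNumber ((wheelGraph n).deleteEdges F) ≤
        totalDominationNumber (wheelGraph n) + (n - 2)) ∧
    totalDominationNumber (wheelGraph n) + (n - 2) = n ∧
    kTotalBondage (wheelGraph n) (n - 2) = 2 * n - (n + 4) / 2 := by
  classical
  haveI : NeZero n := ⟨by omega⟩
  have htdn : totalDominationNumber (wheelGraph n) = 2 := wheel_tdn hn
  have heq : totalDominationNumber (wheelGraph n) + (n - 2) = n := by omega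
  refine ⟨?_, heq, ?_⟩
  · intro F _ hni
    rw [heq]
    exact part1 hn hpar F hni
  · have hlow : ∀ x ∈ {m : ℕ | ∃ F : Set (Sym2 (Option (Fin n))),
        F ⊆ (wheelGraph n).edgeSet ∧ F.ncard = m ∧
        NoIsolatedVerts ((wheelGraph n).deleteEdges F) ∧
        totalDominationNumber (wheelGraph n) + (n - 2) ≤
          totalDominationNumber ((wheelGraph n).deleteEdges F)},
        2 * n - (n + 4) / 2 ≤ x := by
      rintro x ⟨F, hFsub, hFcard, hni, hge⟩
      rw [heq] at hge
      set H := (wheelGraph n).deleteEdges F with hH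
      haveI : DecidableRel H.Adj := Classical.decRel _
      have hwit : ∀ v w : Option (Fin n), v ≠ w → ∃ u, ∀ y, H.Adj u y → y = v ∨ y = w := by
        intro v w hvw
        by_contra hc
        push_neg at hc
        have hTDS : IsTotalDominatingSet H (({v, w} : Set (Option (Fin n)))ᶜ) := by
          intro z
          obtain ⟨y, hy1, hy2, hy3⟩ := hc z
          refine ⟨y, ?_, hy1⟩
          simp only [Set.mem_compl_iff, Set.mem_insert_iff, Set.mem_singleton_iff]
          push_neg
          exact ⟨hy2, hy3⟩
        have hle2 := tdn_le hTDS
        have hnc : ((({v, w} : Set (Option (Fin n)))ᶜ)).ncard = n - 1 := by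
          rw [Set.compl_eq_univ_diff, Set.ncard_diff (Set.subset_univ _), Set.ncard_univ,
            Nat.card_eq_fintype_card, Fintype.card_option, Fintype.card_fin,
            Set.ncard_pair hvw]
          omega
        omega
      have hsum := surplus_le H hni hwit
      have hhand := H.sum_degrees_eq_twice_card_edges
      have hEcard : H.edgeSet.ncard = 2 * n - F.ncard := by
        rw [hH, SimpleGraph.edgeSet_deleteEdges, Set.ncard_diff hFsub,
          wheel_edgeSet hn, Set.ncard_coe_finset, wheelEdges_card hn]
      have hEfin : H.edgeFinset.card = H.edgeSet.ncard := (Set.ncard_eq_toFinset_card' _).symm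
      have hFle : F.ncard ≤ 2 * n := by
        have h := Set.ncard_le_ncard hFsub (Set.toFinite _)
        rwa [wheel_edgeSet hn, Set.ncard_coe_finset, wheelEdges_card hn] at h
      have hcardV : Fintype.card (Option (Fin n)) = n + 1 := by simp
      obtain ⟨m', hm'⟩ := hpar
      omega
    have hmem : (2 * n - (n + 4) / 2) ∈ {m : ℕ | ∃ F : Set (Sym2 (Option (Fin n))),
        F ⊆ (wheelGraph n).edgeSet ∧ F.ncard = m ∧
        NoIsolatedVerts ((wheelGraph n).deleteEdges F) ∧
        totalDominationNumber (wheelGraph n) + (n - 2) ≤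
          totalDominationNumber ((wheelGraph n).deleteEdges F)} := by
      obtain ⟨F, h1, h2, h3, h4⟩ := c1_exists hn hpar
      exact ⟨F, h1, h2, h3, by rw [heq]; exact h4⟩
    rw [kTotalBondage]
    exact le_antisymm (Nat.sInf_le hmem) (hlow _ (Nat.sInf_mem ⟨_, hmem⟩))
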